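/- Let f : [a,b] → ℝ be convex and x, y, z ∈ [a,b] with (x+y+z)/3 = (a+b)/2. Then f(a)+f(b) ≥ (f(x)+f(y)+f(z))/3 + f((x+y+z)/3) ≥ (2/3)·(f((x+y)/2) + f((y+z)/2) + f((x+z)/2)). -/

import Mathlib

set_option maxHeartbeats 1000000 in
private lemma popo_sorted (a b : ℝ) (f : ℝ → ℝ)
    (hconv : ∀ x ∈ Set.Icc a b, ∀ y ∈ Set.Icc a b, ∀ t ∈ Set.Icc (0:ℝ) 1,
      f (t * x + (1 - t) * y) ≤ t * f x + (1 - t) * f y)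
    (x y z : ℝ) (hx : x ∈ Set.Icc a b) (hy : y ∈ Set.Icc a b)
    (hz : z ∈ Set.Icc a b) (hxy : x ≤ y) (hyz : y ≤ z) :
    (2 / 3) * (f ((x + y) / 2) + f ((y + z) / 2) + f ((x + z) / 2)) ≤
      (f x + f y + f z) / 3 + f ((x + y + z) / 3) := by
  obtain ⟨hax, hxb⟩ := hx
  obtain ⟨hay, hyb⟩ := hy
  obtain ⟨haz, hzb⟩ := hz
  obtain ⟨m, hm⟩ : ∃ m : ℝ, m = (x + y + z) / 3 := ⟨_, rfl⟩
  rw [← hm]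
  have hxm : x ≤ m := by rw [hm]; linarith
  have hmz : m ≤ z := by rw [hm]; linarith
  have hmab : m ∈ Set.Icc a b := ⟨le_trans hax hxm, le_trans hmz hzb⟩
  have h3 : f ((x + y) / 2) ≤ (1/2) * f x + (1 - 1/2) * f y := by
    have := hconv x ⟨hax, hxb⟩ y ⟨hay, hyb⟩ (1/2) ⟨by norm_num, by norm_num⟩
    have e : (1/2 : ℝ) * x + (1 - 1/2) * y = (x + y) / 2 := by ring
    rwa [e] at this
  have h3' : f ((y + z) / 2) ≤ (1/2) * f y + (1 - 1/2) * f z := by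
    have := hconv y ⟨hay, hyb⟩ z ⟨haz, hzb⟩ (1/2) ⟨by norm_num, by norm_num⟩
    have e : (1/2 : ℝ) * y + (1 - 1/2) * z = (y + z) / 2 := by ring
    rwa [e] at this
  rcases le_total y m with hym | hmy
  · -- use combinations of m and z
    rcases eq_or_lt_of_le hmz with heq | hlt
    · have hxz : x = z := by rw [hm] at heq; linarith
      have hyz' : y = z := by rw [hm] at heq; linarith
      have em : m = z := heq
      rw [hxz, hyz', em, show (z + z) / 2 = z from by ring]
      linarith
    · obtain ⟨s, hs⟩ : ∃ s : ℝ, s = ((z - x)/2) / (z - m) := ⟨_, rfl⟩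
      obtain ⟨t, ht⟩ : ∃ t : ℝ, t = ((z - y)/2) / (z - m) := ⟨_, rfl⟩
      have hzm : (0:ℝ) < z - m := by linarith
      have hs0 : 0 ≤ s := by rw [hs]; apply div_nonneg <;> linarith
      have ht0 : 0 ≤ t := by rw [ht]; apply div_nonneg <;> linarith
      have hs1 : s ≤ 1 := by
        rw [hs, div_le_one hzm]; linarith
      have ht1 : t ≤ 1 := by
        rw [ht, div_le_one hzm]; linarith
      have hst : s + t = 3/2 := by
        rw [hs, ht]
        rw [← add_div, div_eq_iff (ne_of_gt hzm)]
        rw [hm]; ring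
      have h1 := hconv m hmab z ⟨haz, hzb⟩ s ⟨hs0, hs1⟩
      have h2 := hconv m hmab z ⟨haz, hzb⟩ t ⟨ht0, ht1⟩
      have e1 : s * m + (1 - s) * z = (x + z) / 2 := by
        have h := div_mul_cancel₀ ((z - x)/2) (ne_of_gt hzm)
        rw [← hs] at h
        linear_combination -h
      have e2 : t * m + (1 - t) * z = (y + z) / 2 := by
        have h := div_mul_cancel₀ ((z - y)/2) (ne_of_gt hzm)
        rw [← ht] at h
        linear_combination -h
      rw [e1] at h1
      rw [e2] at h2
      have c1 : s * f m + t * f m = 3/2 * f m := by linear_combination f m * hst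
      have c2 : (1 - s) * f z + (1 - t) * f z = 1/2 * f z := by
        linear_combination (- f z) * hst
      linarith
  · -- use combinations of x and m
    rcases eq_or_lt_of_le hxm with heq | hlt
    · have hxz : x = z := by rw [hm] at heq; linarith
      have hxy' : x = y := by rw [hm] at heq; linarith
      have em : m = x := heq.symm
      rw [← hxz, ← hxy', em, show (x + x) / 2 = x from by ring]
      linarith
    · obtain ⟨s, hs⟩ : ∃ s : ℝ, s = ((y - x)/2) / (m - x) := ⟨_, rfl⟩
      obtain ⟨t, ht⟩ : ∃ t : ℝ, t = ((z - x)/2) / (m - x) := ⟨_, rfl⟩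
      have hmx : (0:ℝ) < m - x := by linarith
      have hs0 : 0 ≤ s := by rw [hs]; apply div_nonneg <;> linarith
      have ht0 : 0 ≤ t := by rw [ht]; apply div_nonneg <;> linarith
      have hs1 : s ≤ 1 := by
        rw [hs, div_le_one hmx]; linarith
      have ht1 : t ≤ 1 := by
        rw [ht, div_le_one hmx]; linarith
      have hst : s + t = 3/2 := by
        rw [hs, ht]
        rw [← add_div, div_eq_iff (ne_of_gt hmx)]
        rw [hm]; ring
      have h1 := hconv m hmab x ⟨hax, hxb⟩ s ⟨hs0, hs1⟩
      have h2 := hconv m hmab x ⟨hax, hxb⟩ t ⟨ht0, ht1⟩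
      have e1 : s * m + (1 - s) * x = (x + y) / 2 := by
        have h := div_mul_cancel₀ ((y - x)/2) (ne_of_gt hmx)
        rw [← hs] at h
        linear_combination h
      have e2 : t * m + (1 - t) * x = (x + z) / 2 := by
        have h := div_mul_cancel₀ ((z - x)/2) (ne_of_gt hmx)
        rw [← ht] at h
        linear_combination h
      rw [e1] at h1
      rw [e2] at h2
      have c1 : s * f m + t * f m = 3/2 * f m := by linear_combination f m * hst
      have c2 : (1 - s) * f x + (1 - t) * f x = 1/2 * f x := by
        linear_combination (- f x) * hst
      linarith

private lemma chord (a b : ℝ) (hab : a < b) (f : ℝ → ℝ)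
    (hconv : ∀ x ∈ Set.Icc a b, ∀ y ∈ Set.Icc a b, ∀ t ∈ Set.Icc (0:ℝ) 1,
      f (t * x + (1 - t) * y) ≤ t * f x + (1 - t) * f y)
    (u : ℝ) (hu : u ∈ Set.Icc a b) :
    f u ≤ ((b - u)/(b - a)) * f a + (1 - (b - u)/(b - a)) * f b := by
  obtain ⟨hau, hub⟩ := hu
  have hba : (0:ℝ) < b - a := by linarith
  have h0 : 0 ≤ (b - u)/(b - a) := by apply div_nonneg <;> linarith
  have h1 : (b - u)/(b - a) ≤ 1 := by rw [div_le_one hba]; linarith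
  have h := hconv a ⟨le_refl a, le_of_lt hab⟩ b ⟨le_of_lt hab, le_refl b⟩
    ((b - u)/(b - a)) ⟨h0, h1⟩
  have e : (b - u)/(b - a) * a + (1 - (b - u)/(b - a)) * b = u := by
    field_simp
    ring
  rwa [e] at h

set_option maxHeartbeats 1000000 in
theorem stmt_10 (a b : ℝ) (hab : a ≤ b) (f : ℝ → ℝ)
    (hconv : ∀ x ∈ Set.Icc a b, ∀ y ∈ Set.Icc a b, ∀ t ∈ Set.Icc (0:ℝ) 1,
      f (t * x + (1 - t) * y) ≤ t * f x + (1 - t) * f y)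
    (x y z : ℝ) (hx : x ∈ Set.Icc a b) (hy : y ∈ Set.Icc a b)
    (hz : z ∈ Set.Icc a b) (hc : (x + y + z) / 3 = (a + b) / 2) :
    (2 / 3) * (f ((x + y) / 2) + f ((y + z) / 2) + f ((x + z) / 2)) ≤
      (f x + f y + f z) / 3 + f ((x + y + z) / 3) ∧
    (f x + f y + f z) / 3 + f ((x + y + z) / 3) ≤ f a + f b := by
  constructor
  · rcases le_total x y with h1 | h1 <;> rcases le_total y z with h2 | h2 <;>
      rcases le_total x z with h3 | h3
    · have h := popo_sorted a b f hconv x y z hx hy hz h1 h2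
      ring_nf at h ⊢; linarith
    · have h := popo_sorted a b f hconv x y z hx hy hz h1 h2
      ring_nf at h ⊢; linarith
    · have h := popo_sorted a b f hconv x z y hx hz hy h3 h2
      ring_nf at h ⊢; linarith
    · have h := popo_sorted a b f hconv z x y hz hx hy h3 h1
      ring_nf at h ⊢; linarith
    · have h := popo_sorted a b f hconv y x z hy hx hz h1 h3
      ring_nf at h ⊢; linarith
    · have h := popo_sorted a b f hconv y z x hy hz hx h2 h3
      ring_nf at h ⊢; linarith
    · have h := popo_sorted a b f hconv y x z hy hx hz h1 h3
      ring_nf at h ⊢; linarith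
    · have h := popo_sorted a b f hconv z y x hz hy hx h2 h1
      ring_nf at h ⊢; linarith
  · rcases eq_or_lt_of_le hab with heq | hlt
    · have hxa : x = a := le_antisymm (by rw [heq]; exact hx.2) hx.1
      have hya : y = a := le_antisymm (by rw [heq]; exact hy.2) hy.1
      have hza : z = a := le_antisymm (by rw [heq]; exact hz.2) hz.1
      rw [hxa, hya, hza, show (a + a + a) / 3 = a from by ring, ← heq]
      linarith
    · have cx := chord a b hlt f hconv x hx
      have cy := chord a b hlt f hconv y hy
      have cz := chord a b hlt f hconv z hz
      have hm : f ((x + y + z)/3) ≤ (1/2) * f a + (1 - 1/2) * f b := by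
        have h := hconv a ⟨le_refl a, hab⟩ b ⟨hab, le_refl b⟩ (1/2)
          ⟨by norm_num, by norm_num⟩
        have e : (1/2:ℝ) * a + (1 - 1/2) * b = (x + y + z)/3 := by
          rw [hc]; ring
        rwa [e] at h
      have hba : (0:ℝ) < b - a := by linarith
      have hsum : (b - x)/(b - a) + (b - y)/(b - a) + (b - z)/(b - a) = 3/2 := by
        rw [← add_div, ← add_div, div_eq_iff (ne_of_gt hba)]
        linarith
      have c1 : (b - x)/(b - a) * f a + (b - y)/(b - a) * f a
          + (b - z)/(b - a) * f a = 3/2 * f a := by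
        linear_combination f a * hsum
      have c2 : (1 - (b - x)/(b - a)) * f b + (1 - (b - y)/(b - a)) * f b
          + (1 - (b - z)/(b - a)) * f b = 3/2 * f b := by
        linear_combination (- f b) * hsum
      linarith
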